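/- Every coset of the cyclic subgroup H generated by (1,1,...,1) in (Z/(n+1))^n contains exactly one parking function, where a vector (a_1,...,a_n) with entries in {1,...,n+1} ⊆ Z/(n+1) is identified with the corresponding function on [n]. -/
import Mathlib

open Finset

namespace ParkingAux

variable {n : ℕ}

/-- number of entries of `a` equal to residue `r` -/
def cnt (a : Fin n → ZMod (n+1)) (r : ZMod (n+1)) : ℕ :=
  #(Finset.univ.filter (fun i => a i = r))

/-- prefix sums of counts over residues 1,2,...,t -/
def S (a : Fin n → ZMod (n+1)) (t : ℕ) : ℕ :=
  ∑ m ∈ Finset.range t, cnt a ((m+1 : ℕ) : ZMod (n+1))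

/-- integer "height" function -/
def Q (a : Fin n → ZMod (n+1)) (t : ℕ) : ℤ := (S a t : ℤ) - t

lemma sum_cnt_univ (a : Fin n → ZMod (n+1)) :
    ∑ r : ZMod (n+1), cnt a r = n := by
  have h := Finset.card_eq_sum_card_fiberwise
    (f := a) (s := Finset.univ) (t := Finset.univ) (fun i _ => Finset.mem_univ (a i))
  simpa [cnt, Finset.card_univ] using h.symm

lemma S_add (a : Fin n → ZMod (n+1)) (t j : ℕ) :
    S a (t + j) = S a t + ∑ m ∈ Finset.range j, cnt a ((t + m + 1 : ℕ) : ZMod (n+1)) := by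
  induction j with
  | zero => simp
  | succ j ih =>
      rw [← Nat.add_assoc, S, Finset.sum_range_succ, ← S, ih, Finset.sum_range_succ]
      omega

lemma sum_window (a : Fin n → ZMod (n+1)) (t : ℕ) :
    ∑ m ∈ Finset.range (n+1), cnt a ((t + m + 1 : ℕ) : ZMod (n+1))
      = ∑ r : ZMod (n+1), cnt a r := by
  refine Finset.sum_bij' (fun m _ => ((t + m + 1 : ℕ) : ZMod (n+1)))
    (fun r _ => (r - ((t + 1 : ℕ) : ZMod (n+1))).val) (fun m _ => Finset.mem_univ _)
    (fun r _ => ?_) (fun m hm => ?_) (fun r _ => ?_) (fun m _ => rfl)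
  · exact Finset.mem_range.mpr (ZMod.val_lt _)
  · have hm' := Finset.mem_range.mp hm
    have : ((t + m + 1 : ℕ) : ZMod (n+1)) - ((t + 1 : ℕ) : ZMod (n+1)) = (m : ZMod (n+1)) := by
      push_cast; ring
    show ((((t + m + 1 : ℕ) : ZMod (n+1))) - ((t + 1 : ℕ) : ZMod (n+1))).val = m
    rw [this, ZMod.val_cast_of_lt hm']
  · have h1 : (((r - ((t + 1 : ℕ) : ZMod (n+1))).val : ℕ) : ZMod (n+1))
        = r - ((t + 1 : ℕ) : ZMod (n+1)) := ZMod.natCast_rightInverse _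
    push_cast
    push_cast at h1
    rw [h1]; ring

lemma S_period (a : Fin n → ZMod (n+1)) (t : ℕ) :
    S a (t + (n+1)) = S a t + n := by
  rw [S_add, sum_window, sum_cnt_univ]

lemma Q_period (a : Fin n → ZMod (n+1)) (t : ℕ) :
    Q a (t + (n+1)) = Q a t - 1 := by
  simp only [Q, S_period]
  push_cast; ring

/-- lift is at least 1 -/
lemma one_le_lift (lift : ZMod (n + 1) → ℕ)
    (hlift : ∀ x : ZMod (n + 1), lift x = if x.val = 0 then n + 1 else x.val)
    (x : ZMod (n+1)) : 1 ≤ lift x := by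
  rw [hlift]
  split <;> omega

/-- key fiber identity -/
lemma card_filter_eq (lift : ZMod (n + 1) → ℕ)
    (hlift : ∀ x : ZMod (n + 1), lift x = if x.val = 0 then n + 1 else x.val)
    (a : Fin n → ZMod (n+1)) (c : ZMod (n+1)) (j : ℕ) (hj : j ≤ n) :
    #(Finset.univ.filter (fun i => lift (a i + c) ≤ j))
      = ∑ m ∈ Finset.range j, cnt a (((-c).val + m + 1 : ℕ) : ZMod (n+1)) := by
  set s := (-c).val with hs
  have hcs : -c = ((s : ℕ) : ZMod (n+1)) := (ZMod.natCast_rightInverse _).symm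
  have hmem : ∀ i ∈ Finset.univ.filter (fun i => lift (a i + c) ≤ j),
      lift (a i + c) - 1 ∈ Finset.range j := by
    intro i hi
    have hi' : lift (a i + c) ≤ j := by simpa using (Finset.mem_filter.mp hi).2
    have h1 := one_le_lift lift hlift (a i + c)
    exact Finset.mem_range.mpr (by omega)
  rw [Finset.card_eq_sum_card_fiberwise hmem]
  refine Finset.sum_congr rfl (fun m hm => ?_)
  have hmj := Finset.mem_range.mp hm
  congr 1
  rw [Finset.filter_filter]
  refine Finset.filter_congr (fun i _ => ?_)
  have hval : (((m + 1 : ℕ) : ZMod (n+1))).val = m + 1 :=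
    ZMod.val_cast_of_lt (by omega)
  constructor
  · rintro ⟨h1, h2⟩
    have h1l := one_le_lift lift hlift (a i + c)
    have h0 : (a i + c).val ≠ 0 := by
      intro h0
      rw [hlift, if_pos h0] at h1
      omega
    have hlv : lift (a i + c) = (a i + c).val := by
      rw [hlift, if_neg h0]
    have hv : (a i + c).val = m + 1 := by omega
    have : a i + c = ((m + 1 : ℕ) : ZMod (n+1)) := by
      have := ZMod.natCast_rightInverse (n := n+1) (a i + c)
      rw [← this, hv]
    have : a i = ((m + 1 : ℕ) : ZMod (n+1)) + ((s : ℕ) : ZMod (n+1)) := by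
      rw [← hcs]
      linear_combination this
    rw [this]
    push_cast
    ring
  · intro h
    have hac : a i + c = ((m + 1 : ℕ) : ZMod (n+1)) := by
      have : a i = ((s + m + 1 : ℕ) : ZMod (n+1)) := h
      rw [this]
      push_cast
      push_cast at hcs
      linear_combination -hcs
    have hv : (a i + c).val = m + 1 := by rw [hac, hval]
    have hlv : lift (a i + c) = m + 1 := by
      rw [hlift, hv]
      simp
    constructor <;> omega

/-- the parking condition in terms of Q -/
lemma parking_iff (lift : ZMod (n + 1) → ℕ)
    (hlift : ∀ x : ZMod (n + 1), lift x = if x.val = 0 then n + 1 else x.val)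
    (a : Fin n → ZMod (n+1)) (c : ZMod (n+1)) :
    (∀ j : ℕ, 1 ≤ j → j ≤ n →
        j ≤ #(Finset.univ.filter (fun i => lift (a i + c) ≤ j)))
      ↔ (∀ j : ℕ, 1 ≤ j → j ≤ n → Q a ((-c).val) ≤ Q a ((-c).val + j)) := by
  set s := (-c).val with hs
  have hcard : ∀ j : ℕ, j ≤ n →
      #(Finset.univ.filter (fun i => lift (a i + c) ≤ j)) = S a (s + j) - S a s := by
    intro j hj
    rw [card_filter_eq lift hlift a c j hj, S_add]
    simp only [← hs]
    omega
  have hle : ∀ j : ℕ, S a s ≤ S a (s + j) := by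
    intro j; rw [S_add]; omega
  constructor
  · intro h j h1 h2
    have := h j h1 h2
    rw [hcard j h2] at this
    have := hle j
    simp only [Q]
    omega
  · intro h j h1 h2
    have := h j h1 h2
    simp only [Q] at this
    rw [hcard j h2]
    have := hle j
    omega

/-- existence of a good starting point -/
lemma exists_good (a : Fin n → ZMod (n+1)) :
    ∃ s < n + 1, ∀ j : ℕ, 1 ≤ j → j ≤ n → Q a s ≤ Q a (s + j) := by
  classical
  have hex : ∃ s, s < n + 1 ∧ ∀ t < n + 1, Q a s ≤ Q a t := by
    obtain ⟨s, hs, hmin⟩ := Finset.exists_min_image (Finset.range (n+1)) (Q a)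
      ⟨0, Finset.mem_range.mpr (Nat.succ_pos n)⟩
    exact ⟨s, Finset.mem_range.mp hs, fun t ht => hmin t (Finset.mem_range.mpr ht)⟩
  set s := Nat.find hex with hsdef
  obtain ⟨hlt, hmin⟩ := Nat.find_spec hex
  refine ⟨s, hlt, fun j h1 h2 => ?_⟩
  by_cases hc : s + j ≤ n
  · exact hmin _ (by omega)
  · set s' := s + j - (n + 1) with hs'
    have hsj : s + j = s' + (n+1) := by omega
    have hs's : s' < s := by omega
    have hnot := Nat.find_min hex hs's
    push_neg at hnot
    obtain ⟨t, ht, hQt⟩ := hnot (by omega)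
    have hst : Q a s ≤ Q a t := hmin t ht
    rw [hsj, Q_period]
    omega

/-- uniqueness of good starting points -/
lemma good_unique (hn : 1 ≤ n) (a : Fin n → ZMod (n+1)) (s s' : ℕ)
    (hs : s < n + 1) (hs' : s' < n + 1)
    (hg : ∀ j : ℕ, 1 ≤ j → j ≤ n → Q a s ≤ Q a (s + j))
    (hg' : ∀ j : ℕ, 1 ≤ j → j ≤ n → Q a s' ≤ Q a (s' + j)) :
    s = s' := by
  by_contra hne
  -- wlog s < s'
  wlog hlt : s < s' generalizing s s'
  · exact this s' s hs' hs hg' hg (Ne.symm hne) (by omega)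
  have h1 : Q a s ≤ Q a s' := by
    have := hg (s' - s) (by omega) (by omega)
    rwa [show s + (s' - s) = s' by omega] at this
  have h2 : Q a s' ≤ Q a (s + (n+1)) := by
    have := hg' (s + (n+1) - s') (by omega) (by omega)
    rwa [show s' + (s + (n+1) - s') = s + (n+1) by omega] at this
  rw [Q_period] at h2
  omega

end ParkingAux

/-- Every coset of the cyclic subgroup H generated by (1,…,1) in (ℤ/(n+1))ⁿ contains
exactly one parking function, where each entry of a vector is lifted to its
representative in {1,…,n+1} (so the residue 0 represents n+1). -/
theorem unique_parking_in_coset (n : ℕ) (hn : 1 ≤ n)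
    (lift : ZMod (n + 1) → ℕ)
    (hlift : ∀ x : ZMod (n + 1), lift x = if x.val = 0 then n + 1 else x.val) :
    ∀ a : Fin n → ZMod (n + 1),
      ∃! v : Fin n → ZMod (n + 1),
        v - a ∈ AddSubgroup.zmultiples (fun _ => 1 : Fin n → ZMod (n + 1)) ∧
        ∀ j : ℕ, 1 ≤ j → j ≤ n →
          j ≤ (Finset.univ.filter (fun i => lift (v i) ≤ j)).card := by
  intro a
  obtain ⟨s, hs, hgood⟩ := ParkingAux.exists_good a
  set c : ZMod (n+1) := -((s : ℕ) : ZMod (n+1)) with hc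
  have hcval : (-c).val = s := by
    rw [hc, neg_neg]
    exact ZMod.val_cast_of_lt hs
  refine ⟨fun i => a i + c, ⟨?_, ?_⟩, ?_⟩
  · rw [AddSubgroup.mem_zmultiples_iff]
    refine ⟨-(s : ℤ), funext fun i => ?_⟩
    simp only [Pi.smul_apply, Pi.sub_apply, zsmul_eq_mul, mul_one]
    push_cast
    rw [hc]
    ring
  · have := (ParkingAux.parking_iff lift hlift a c).mpr
    rw [hcval] at this
    exact this hgood
  · rintro v ⟨hv1, hv2⟩
    rw [AddSubgroup.mem_zmultiples_iff] at hv1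
    obtain ⟨k, hk⟩ := hv1
    have hveq : v = fun i => a i + ((k : ZMod (n+1))) := by
      funext i
      have := congrFun hk i
      simp only [Pi.smul_apply, Pi.sub_apply, zsmul_eq_mul, mul_one] at this
      linear_combination -this
    set c' : ZMod (n+1) := ((k : ZMod (n+1))) with hc'
    have hs' : (-c').val < n + 1 := ZMod.val_lt _
    have hgood' : ∀ j : ℕ, 1 ≤ j → j ≤ n → ParkingAux.Q a ((-c').val) ≤
        ParkingAux.Q a ((-c').val + j) := by
      apply (ParkingAux.parking_iff lift hlift a c').mp
      intro j h1 h2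
      simpa [hveq] using hv2 j h1 h2
    have hss : s = (-c').val := ParkingAux.good_unique hn a s ((-c').val) hs hs' hgood hgood'
    have hcc : c = c' := by
      have : -c = -c' := by
        rw [hc, neg_neg, hss]
        exact ZMod.natCast_rightInverse _
      exact neg_injective this
    rw [hveq, hcc]
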